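/- Let q ∈ ℝ³ be orthogonal to k + k₃ and z = α(k+k₃) + q with z ≠ 0 and z ≠ k+k₃. Then ⟨q, ∇C(z)⟩ = |q|² · (Ω'(|z|)/|z| + Ω'(|k+k₃-z|)/|k+k₃-z|), which is strictly positive when q ≠ 0, given that Ω'(x)/x > 0 for all x > 0. -/
import Mathlib


open RealInnerProductSpace

/-- the directional derivative of the resonance function in an orthogonal
direction `q` equals `‖q‖²(Ω'(|z|)/|z| + Ω'(|k+k₃-z|)/|k+k₃-z|)`, strictly positive
when `q ≠ 0`. -/
theorem stmt_1
    (Ω Ω' : ℝ → ℝ)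
    (hΩ : ∀ x : ℝ, HasDerivAt Ω (Ω' x) x)
    (hpos : ∀ x : ℝ, 0 < x → 0 < Ω' x / x)
    (k k₃ q : EuclideanSpace ℝ (Fin 3)) (α : ℝ)
    (hperp : ⟪q, k + k₃⟫ = 0)
    (z : EuclideanSpace ℝ (Fin 3)) (hz : z = α • (k + k₃) + q)
    (hz0 : z ≠ 0) (hzk : z ≠ k + k₃) :
    ⟪q, (Ω' ‖k + k₃ - z‖ / ‖z - (k + k₃)‖) • (z - (k + k₃))
        + (Ω' ‖z‖ / ‖z‖) • z⟫
      = ‖q‖ ^ 2 * (Ω' ‖z‖ / ‖z‖ + Ω' ‖k + k₃ - z‖ / ‖k + k₃ - z‖) ∧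
    (q ≠ 0 →
      0 < ⟪q, (Ω' ‖k + k₃ - z‖ / ‖z - (k + k₃)‖) • (z - (k + k₃))
            + (Ω' ‖z‖ / ‖z‖) • z⟫) := by
  have hqz : ⟪q, z⟫ = ‖q‖ ^ 2 := by
    rw [hz, inner_add_right, inner_smul_right, hperp, real_inner_self_eq_norm_sq]
    ring
  have hqzk : ⟪q, z - (k + k₃)⟫ = ‖q‖ ^ 2 := by
    rw [inner_sub_right, hqz, hperp]; ring
  have hnorm : ‖k + k₃ - z‖ = ‖z - (k + k₃)‖ := by rw [← norm_neg]; congr 1; abel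
  have hmain : ⟪q, (Ω' ‖k + k₃ - z‖ / ‖z - (k + k₃)‖) • (z - (k + k₃))
        + (Ω' ‖z‖ / ‖z‖) • z⟫
      = ‖q‖ ^ 2 * (Ω' ‖z‖ / ‖z‖ + Ω' ‖k + k₃ - z‖ / ‖k + k₃ - z‖) := by
    rw [inner_add_right, inner_smul_right, inner_smul_right, hqz, hqzk, hnorm]
    ring
  refine ⟨hmain, fun hq => ?_⟩
  rw [hmain]
  have hzpos : (0:ℝ) < ‖z‖ := norm_pos_iff.mpr hz0
  have hzkpos : (0:ℝ) < ‖k + k₃ - z‖ := by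
    rw [hnorm]; exact norm_pos_iff.mpr (sub_ne_zero.mpr hzk)
  have hqpos : (0:ℝ) < ‖q‖ ^ 2 := pow_pos (norm_pos_iff.mpr hq) 2
  exact mul_pos hqpos (add_pos (hpos _ hzpos) (hpos _ hzkpos))
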